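/- There is a bijection between the set of stable monomial ideals J in k[x₁,x₂] whose Groebner escalier (the set of monomials not in J) has exactly p elements and exactly h distinct x₂-exponents, and the set of integer partitions of p into h distinct positive parts. -/
import Mathlib


def MonomialIdeal {n : ℕ} (I : Set (Fin n → ℕ)) : Prop :=
  ∀ τ ∈ I, ∀ σ : Fin n → ℕ, τ + σ ∈ I

def IsStable {n : ℕ} (I : Set (Fin n → ℕ)) : Prop :=
  ∀ τ ∈ I, ∀ m j : Fin n, τ m ≠ 0 → (∀ l, l < m → τ l = 0) → m < j →
    τ - Pi.single m 1 + Pi.single j 1 ∈ I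

/-- The monomial `x₁^a x₂^e` in `k[x₁,x₂]`, as an exponent vector. -/
def mon2 (a e : ℕ) : Fin 2 → ℕ := ![a, e]

namespace StableAux

lemma mon2_eta (τ : Fin 2 → ℕ) : mon2 (τ 0) (τ 1) = τ := by
  funext i; fin_cases i <;> rfl

lemma mon2_add (a e b f : ℕ) : mon2 a e + mon2 b f = mon2 (a+b) (e+f) := by
  funext i; fin_cases i <;> rfl

lemma mon2_shift (τ : Fin 2 → ℕ) :
    τ - Pi.single 0 1 + Pi.single 1 1 = mon2 (τ 0 - 1) (τ 1 + 1) := by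
  funext i; fin_cases i <;> simp [mon2, Pi.single, Function.update]

lemma mon2_inj {a e b f : ℕ} (h : mon2 a e = mon2 b f) : a = b ∧ e = f :=
  ⟨congrFun h 0, congrFun h 1⟩

/-- A finite downward-closed set of naturals is an initial segment. -/
lemma down_eq_Iio {s : Set ℕ} (hf : s.Finite) (hd : ∀ a ∈ s, ∀ b ≤ a, b ∈ s) :
    s = Set.Iio (Nat.card s) := by
  rcases s.eq_empty_or_nonempty with h | h
  · rw [h]; ext x; simp [Nat.card_eq_card_toFinset]
  · have hne : hf.toFinset.Nonempty := by
      rwa [← Set.Finite.toFinset_nonempty hf] at h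
    set m := hf.toFinset.max' hne with hm
    have hms : m ∈ s := by
      have := hf.toFinset.max'_mem hne
      rwa [Set.Finite.mem_toFinset] at this
    have hsub : s = Set.Iic m := by
      apply Set.eq_of_subset_of_subset
      · intro x hx
        exact hf.toFinset.le_max' x (by rwa [Set.Finite.mem_toFinset])
      · intro x hx
        exact hd m hms x hx
    have hcard : Nat.card s = m + 1 := by
      rw [hsub]; simp [Nat.card_eq_card_toFinset]
    rw [hcard, hsub]
    ext x; simp [Nat.lt_succ_iff]

/-- the λ function of an ideal -/
noncomputable def lam (I : Set (Fin 2 → ℕ)) (e : ℕ) : ℕ :=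
  Nat.card {a : ℕ | mon2 a e ∉ I}

section Char

variable {I : Set (Fin 2 → ℕ)} (hMI : MonomialIdeal I)
  (hfin : {τ : Fin 2 → ℕ | τ ∉ I}.Finite)

include hMI hfin in
lemma mem_char : ∀ a e : ℕ, mon2 a e ∉ I ↔ a < lam I e := by
  intro a e
  have hset : {a : ℕ | mon2 a e ∉ I} = Set.Iio (lam I e) := by
    apply down_eq_Iio
    · apply Set.Finite.preimage (f := fun a => mon2 a e) ?_ hfin
      intro x _ y _ hxy
      exact (mon2_inj hxy).1
    · intro x hx b hb
      intro hbI
      exact hx (by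
        have := hMI _ hbI (mon2 (x - b) 0)
        rwa [mon2_add, Nat.add_sub_cancel' hb, Nat.add_zero] at this)
  constructor
  · intro hx; have : a ∈ {a : ℕ | mon2 a e ∉ I} := hx
    rwa [hset] at this
  · intro hx; have : a ∈ Set.Iio (lam I e) := hx
    rw [← hset] at this; exact this

include hMI hfin in
lemma exps_eq_Iio :
    {e : ℕ | ∃ a : ℕ, mon2 a e ∉ I} =
      Set.Iio (Nat.card {e : ℕ | ∃ a : ℕ, mon2 a e ∉ I}) := by
  apply down_eq_Iio
  · apply Set.Finite.subset (hfin.image (fun τ => τ 1))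
    rintro e ⟨a, ha⟩
    exact ⟨mon2 a e, ha, rfl⟩
  · rintro x ⟨a, ha⟩ b hb
    refine ⟨a, fun hbI => ha ?_⟩
    have := hMI _ hbI (mon2 0 (x - b))
    rwa [mon2_add, Nat.add_zero, Nat.add_sub_cancel' hb] at this

end Char

/-- Main escalier/cardinality computation: if membership in the escalier is
characterized by a function `g` vanishing from `h` on, then the escalier is the
explicit finite staircase. -/
lemma escalier_card {I : Set (Fin 2 → ℕ)} {g : ℕ → ℕ} {h : ℕ}
    (hchar : ∀ τ : Fin 2 → ℕ, τ ∉ I ↔ τ 0 < g (τ 1))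
    (hg0 : ∀ e, h ≤ e → g e = 0) :
    {τ : Fin 2 → ℕ | τ ∉ I} =
      ↑((Finset.range h).biUnion fun e => (Finset.range (g e)).image (fun a => mon2 a e))
    ∧ Nat.card {τ : Fin 2 → ℕ | τ ∉ I} = ∑ e ∈ Finset.range h, g e := by
  have hset : {τ : Fin 2 → ℕ | τ ∉ I} =
      ↑((Finset.range h).biUnion fun e => (Finset.range (g e)).image (fun a => mon2 a e)) := by
    ext τ
    simp only [Set.mem_setOf_eq, Finset.coe_biUnion, Finset.coe_image, Finset.coe_range,
      Set.mem_iUnion, Set.mem_image, Set.mem_Iio]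
    constructor
    · intro hτ
      have h1 : τ 0 < g (τ 1) := (hchar τ).1 hτ
      have h2 : τ 1 < h := by
        by_contra hc
        rw [hg0 _ (le_of_not_gt hc)] at h1; omega
      exact ⟨τ 1, h2, τ 0, h1, mon2_eta τ⟩
    · rintro ⟨e, he, a, ha, rfl⟩
      exact (hchar _).2 (by simpa [mon2] using ha)
  refine ⟨hset, ?_⟩
  rw [hset]
  simp only [Nat.card_eq_card_toFinset, Finset.toFinset_coe]
  rw [Finset.card_biUnion]
  · apply Finset.sum_congr rfl
    intro e _
    rw [Finset.card_image_of_injective _ (fun x y hxy => (mon2_inj hxy).1), Finset.card_range]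
  · intro e _ e' _ hee'
    apply Finset.disjoint_left.2
    intro τ hτ hτ'
    simp only [Finset.mem_image, Finset.mem_range] at hτ hτ'
    obtain ⟨a, _, rfl⟩ := hτ
    obtain ⟨b, _, hb⟩ := hτ'
    exact hee' ((mon2_inj hb).2.symm)

end StableAux

open StableAux in
/-- The map sending a stable monomial ideal `J ⊂ k[x₁,x₂]` whose escalier has `p`
elements and exactly `h` distinct `x₂`-exponents to the tuple `(λ₀,…,λ_{h-1})`,
`λₑ = #{a : x₁^a x₂^e ∈ N(J)}`, is a bijection onto the integer partitions of `p`
into `h` distinct positive parts. -/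
theorem stable_ideals_two_vars_biject_with_distinct_partitions (p h : ℕ) :
    Set.BijOn
      (fun I : Set (Fin 2 → ℕ) => fun e : Fin h =>
        Nat.card {a : ℕ | mon2 a (e : ℕ) ∉ I})
      {I : Set (Fin 2 → ℕ) | MonomialIdeal I ∧ IsStable I ∧
        {τ : Fin 2 → ℕ | τ ∉ I}.Finite ∧
        Nat.card {τ : Fin 2 → ℕ | τ ∉ I} = p ∧
        Nat.card {e : ℕ | ∃ a : ℕ, mon2 a e ∉ I} = h}
      {f : Fin h → ℕ | (∀ e, 0 < f e) ∧ StrictAnti f ∧ ∑ e, f e = p} := by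
  -- Preliminary facts for any ideal in the source set
  have main : ∀ I : Set (Fin 2 → ℕ), MonomialIdeal I → IsStable I →
      {τ : Fin 2 → ℕ | τ ∉ I}.Finite →
      Nat.card {e : ℕ | ∃ a : ℕ, mon2 a e ∉ I} = h →
      (∀ e, e < h ↔ 0 < lam I e) ∧
      (∀ e, 0 < lam I (e+1) → lam I (e+1) < lam I e) ∧
      (∀ τ : Fin 2 → ℕ, τ ∉ I ↔ τ 0 < lam I (τ 1)) := by
    intro I hMI hSt hfin hE
    have hchar := mem_char hMI hfin
    have hpos : ∀ e, e < h ↔ 0 < lam I e := by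
      intro e
      have hIio := exps_eq_Iio hMI hfin
      rw [hE] at hIio
      constructor
      · intro he
        have : e ∈ Set.Iio h := he
        rw [← hIio] at this
        obtain ⟨a, ha⟩ := this
        have := (hchar a e).1 ha; omega
      · intro he
        have : mon2 0 e ∉ I := (hchar 0 e).2 he
        have : e ∈ {e : ℕ | ∃ a : ℕ, mon2 a e ∉ I} := ⟨0, this⟩
        rwa [hIio] at this
    refine ⟨hpos, ?_, ?_⟩
    · intro e hle
      have ha : mon2 (lam I (e+1) - 1) (e+1) ∉ I := (hchar _ _).2 (by omega)
      have hb : mon2 (lam I (e+1) - 1 + 1) e ∉ I := by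
        intro hbI
        have hst := hSt _ hbI 0 1 (by simp [mon2]) ?_ (by decide)
        · rw [mon2_shift] at hst
          simp only [mon2, Matrix.cons_val_zero, Matrix.cons_val_one, Matrix.head_cons] at hst
          rw [Nat.add_sub_cancel] at hst
          exact ha hst
        · intro l hl
          exact absurd hl (by simp [Fin.lt_def])
      have := (hchar _ _).1 hb
      omega
    · intro τ
      conv_lhs => rw [← mon2_eta τ]
      exact hchar (τ 0) (τ 1)
  constructor
  · -- MapsTo
    rintro I ⟨hMI, hSt, hfin, hp, hE⟩
    obtain ⟨hpos, hanti, hchar⟩ := main I hMI hSt hfin hE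
    have hlam : (fun e : Fin h => Nat.card {a : ℕ | mon2 a (e : ℕ) ∉ I}) =
        fun e : Fin h => lam I (e : ℕ) := rfl
    refine ⟨?_, ?_, ?_⟩
    · intro e
      exact (hpos e).1 e.isLt
    · -- StrictAnti
      have key : ∀ e e' : ℕ, e' < e → e < h → lam I e < lam I e' := by
        intro e
        induction e with
        | zero => omega
        | succ n ih =>
          intro e' he' hh
          have h1 : lam I (n+1) < lam I n := hanti n ((hpos (n+1)).1 hh)
          rcases Nat.lt_succ_iff_lt_or_eq.1 he' with h2 | h2
          · exact lt_trans h1 (ih e' h2 (by omega))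
          · rw [h2]; exact h1
      intro e e' hee'
      exact key e' e (by exact_mod_cast hee') e'.isLt
    · -- Sum
      obtain ⟨_, hcard⟩ := escalier_card (g := lam I) (h := h) hchar
        (fun e he => by have := (hpos e); omega)
      rw [hp] at hcard
      rw [← Fin.sum_univ_eq_sum_range (fun e => lam I e) h] at hcard
      exact hcard.symm
  constructor
  · -- InjOn
    rintro I₁ ⟨hMI₁, hSt₁, hfin₁, _, hE₁⟩ I₂ ⟨hMI₂, hSt₂, hfin₂, _, hE₂⟩ heq
    obtain ⟨hpos₁, _, hchar₁⟩ := main I₁ hMI₁ hSt₁ hfin₁ hE₁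
    obtain ⟨hpos₂, _, hchar₂⟩ := main I₂ hMI₂ hSt₂ hfin₂ hE₂
    have hlam : ∀ e : ℕ, lam I₁ e = lam I₂ e := by
      intro e
      by_cases he : e < h
      · exact congrFun heq ⟨e, he⟩
      · have h1 := hpos₁ e; have h2 := hpos₂ e; omega
    ext τ
    have h1 := hchar₁ τ
    have h2 := hchar₂ τ
    have h3 := hlam (τ 1)
    constructor
    · intro hτ; by_contra hc
      exact (h1.2 (h3 ▸ h2.1 hc)) hτ
    · intro hτ; by_contra hc
      exact (h2.2 (h3 ▸ h1.1 hc)) hτ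
  · -- SurjOn
    rintro f ⟨hfpos, hfanti, hfsum⟩
    classical
    obtain ⟨g, hgdef⟩ : ∃ g : ℕ → ℕ, ∀ e, g e = if h' : e < h then f ⟨e, h'⟩ else 0 :=
      ⟨_, fun _ => rfl⟩
    have hganti : ∀ e e', e ≤ e' → g e' ≤ g e := by
      intro e e' hee'
      by_cases h2 : e' < h
      · have h1 : e < h := lt_of_le_of_lt hee' h2
        rw [hgdef, hgdef, dif_pos h1, dif_pos h2]
        exact hfanti.antitone (by exact_mod_cast hee')
      · rw [hgdef e', dif_neg h2]; omega
    have hgstrict : ∀ e, 0 < g (e+1) → g (e+1) < g e := by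
      intro e hpos'
      by_cases h2 : e + 1 < h
      · have h1 : e < h := by omega
        rw [hgdef, hgdef, dif_pos h1, dif_pos h2]
        exact hfanti (by simp [Fin.lt_def])
      · rw [hgdef, dif_neg h2] at hpos'; omega
    set I : Set (Fin 2 → ℕ) := {τ | ¬ τ 0 < g (τ 1)} with hI
    have hcharI : ∀ τ : Fin 2 → ℕ, τ ∉ I ↔ τ 0 < g (τ 1) := by
      intro τ; simp [hI]
    have hg0 : ∀ e, h ≤ e → g e = 0 := fun e he => by
      rw [hgdef, dif_neg (by omega)]
    have hMI : MonomialIdeal I := by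
      intro τ hτ σ
      simp only [hI, Set.mem_setOf_eq, Pi.add_apply, not_lt] at hτ ⊢
      calc g (τ 1 + σ 1) ≤ g (τ 1) := hganti _ _ (by omega)
        _ ≤ τ 0 := hτ
        _ ≤ τ 0 + σ 0 := by omega
    have hSt : IsStable I := by
      intro τ hτ m j hm _ hmj
      have hm0 : m = 0 := by
        have := hmj; rw [Fin.lt_def] at this
        have := j.isLt; ext; omega
      have hj1 : j = 1 := by
        have := hmj; rw [Fin.lt_def] at this
        have := j.isLt; ext; omega
      subst hm0; subst hj1
      rw [mon2_shift]
      simp only [hI, Set.mem_setOf_eq, not_lt] at hτ ⊢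
      simp only [mon2, Matrix.cons_val_zero, Matrix.cons_val_one, Matrix.head_cons]
      by_cases hp2 : 0 < g (τ 1 + 1)
      · have := hgstrict (τ 1) hp2
        omega
      · omega
    have hlamI : ∀ e, lam I e = g e := by
      intro e
      have : {a : ℕ | mon2 a e ∉ I} = Set.Iio (g e) := by
        ext a
        simp only [Set.mem_setOf_eq, Set.mem_Iio]
        rw [hcharI]
        simp [mon2]
      rw [lam, this]
      simp [Nat.card_eq_card_toFinset]
    obtain ⟨hesc, hcard⟩ := escalier_card (I := I) hcharI hg0
    have hfin : {τ : Fin 2 → ℕ | τ ∉ I}.Finite := by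
      rw [hesc]; exact Finset.finite_toSet _
    have hsum : ∑ e ∈ Finset.range h, g e = p := by
      rw [← hfsum, ← Fin.sum_univ_eq_sum_range (fun e => g e) h]
      apply Finset.sum_congr rfl
      intro e _
      rw [hgdef, dif_pos e.isLt]
    have hEset : {e : ℕ | ∃ a : ℕ, mon2 a e ∉ I} = Set.Iio h := by
      ext e
      simp only [Set.mem_setOf_eq, Set.mem_Iio]
      constructor
      · rintro ⟨a, ha⟩
        rw [hcharI] at ha
        simp only [mon2, Matrix.cons_val_zero, Matrix.cons_val_one, Matrix.head_cons] at ha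
        by_contra hc
        rw [hg0 e (by omega)] at ha; omega
      · intro he
        refine ⟨0, ?_⟩
        rw [hcharI]
        show (0:ℕ) < g e
        rw [hgdef, dif_pos he]
        exact hfpos _
    refine ⟨I, ⟨hMI, hSt, hfin, ?_, ?_⟩, ?_⟩
    · rw [hcard, hsum]
    · rw [hEset]; simp [Nat.card_eq_card_toFinset]
    · funext e
      show lam I (e : ℕ) = f e
      rw [hlamI, hgdef, dif_pos e.isLt]
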